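/- Suppose 𝒴 = span(ℝ^N_0, Y_1,…,Y_R) is a finite-dimensional vector subspace of L^0(Ω,𝐅_T,P) with ℝ^N_0 ⊆ 𝒴, and NCA(𝒴) holds. Let f ∈ L^0(Ω,𝐅_T,P) and let φ ∈ L^0(Ω,𝐅_T,P) satisfy max{|f^i|, |Y^i_1|, …, |Y^i_R|} ≤ φ^i P-a.s. for every i. If ρ^𝒴_+(f) is attained and there exists Q ∈ ℳ^φ_e(𝒴) with ρ^𝒴_+(f) = Σ_{i=1}^N E_{Q^i}[f^i], then f is 𝒴-collectively replicable. The analogous statement holds with ρ^𝒴_− in place of ρ^𝒴_+. -/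

import Mathlib

open MeasureTheory Filter Topology
open scoped ENNReal

namespace CollectiveArb

variable {Ω : Type*}

/-- Terminal gains `K_i` of admissible (predictable) strategies for an agent with
filtration `F`, trading the assets indexed by `A`, over times `1,…,T`. -/
def gainsSet {J : ℕ} (F : ℕ → MeasurableSpace Ω) (T : ℕ)
    (A : Finset (Fin J)) (X : Fin J → ℕ → Ω → ℝ) : Set (Ω → ℝ) :=
  { g | ∃ H : Fin J → ℕ → Ω → ℝ,
      (∀ j ∈ A, ∀ s, 1 ≤ s → s ≤ T → Measurable[F (s - 1)] (H j s)) ∧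
      g = fun ω => ∑ j ∈ A, ∑ s ∈ Finset.Icc 1 T, H j s ω * (X j s ω - X j (s - 1) ω) }

/-- No collective arbitrage for the gains sets `K` and the exchange set `Y`:
`(K₁ × ⋯ × K_N + Y) ∩ L⁰₊ = {0}`. -/
def NCA {N : ℕ} [MeasurableSpace Ω] (P : Measure Ω)
    (K : Fin N → Set (Ω → ℝ)) (Y : Set (Fin N → Ω → ℝ)) : Prop :=
  ∀ k : Fin N → Ω → ℝ, ∀ y ∈ Y, (∀ i, k i ∈ K i) →
    (∀ i, ∀ᵐ ω ∂P, 0 ≤ k i ω + y i ω) →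
    ∀ i, (fun ω => k i ω + y i ω) =ᵐ[P] fun _ => (0 : ℝ)

/-- `K^𝒴 = ⨉ᵢ (Kᵢ − L⁰₊(ℱᵢ_T)) + 𝒴`. -/
def KY {N : ℕ} [MeasurableSpace Ω] (P : Measure Ω)
    (FT : Fin N → MeasurableSpace Ω)
    (K : Fin N → Set (Ω → ℝ)) (Y : Set (Fin N → Ω → ℝ)) : Set (Fin N → Ω → ℝ) :=
  { f | ∃ (k l y : Fin N → Ω → ℝ), y ∈ Y ∧ (∀ i, k i ∈ K i) ∧
      (∀ i, Measurable[FT i] (l i) ∧ (∀ᵐ ω ∂P, 0 ≤ l i ω)) ∧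
      ∀ i, f i = fun ω => k i ω - l i ω + y i ω }

/-- `ℝ^N_0`: zero-sum deterministic exchanges, viewed as constant random vectors. -/
def zeroSum (Ω : Type*) (N : ℕ) : Set (Fin N → Ω → ℝ) :=
  { y | ∃ x : Fin N → ℝ, (∑ i, x i) = 0 ∧ ∀ i, y i = fun _ => x i }

/-- `span(ℝ^N_0, Y_1, …, Y_R)`: the finite-dimensional space of exchanges generated
by `ℝ^N_0` and the random vectors `Ys 1, …, Ys R`. -/
def spanExch {N R : ℕ} (Ys : Fin R → Fin N → Ω → ℝ) : Set (Fin N → Ω → ℝ) :=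
  { y | ∃ (x : Fin N → ℝ) (c : Fin R → ℝ), (∑ i, x i) = 0 ∧
      ∀ i, y i = fun ω => x i + ∑ r, c r * Ys r i ω }

/-- `span(𝒴₀ ∪ {g})` for a vector subspace `𝒴₀`. -/
def spanWith {N : ℕ} (Y0 : Set (Fin N → Ω → ℝ)) (g : Fin N → Ω → ℝ) :
    Set (Fin N → Ω → ℝ) :=
  { y | ∃ w ∈ Y0, ∃ c : ℝ, ∀ i, y i = fun ω => w i ω + c * g i ω }

/-- Equivalent martingale measures `Mᵢₑ` for the assets in `A`, w.r.t. the filtration `F`. -/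
def martMeasures {J : ℕ} [MeasurableSpace Ω] (P : Measure Ω)
    (F : ℕ → MeasurableSpace Ω) (T : ℕ) (A : Finset (Fin J))
    (X : Fin J → ℕ → Ω → ℝ) : Set (Measure Ω) :=
  { Q | IsProbabilityMeasure Q ∧ Q ≪ P ∧ P ≪ Q ∧
      ∀ j ∈ A, (∀ t, t ≤ T → Integrable (X j t) Q) ∧
        ∀ s t, s ≤ t → t ≤ T → X j s =ᵐ[Q] Q[X j t | F s] }

/-- Equivalent collective martingale measures `ℳₑ(𝒴)`. -/
def MeY {J N : ℕ} [MeasurableSpace Ω] (P : Measure Ω)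
    (F : Fin N → ℕ → MeasurableSpace Ω) (T : ℕ) (assets : Fin N → Finset (Fin J))
    (X : Fin J → ℕ → Ω → ℝ) (Y : Set (Fin N → Ω → ℝ)) : Set (Fin N → Measure Ω) :=
  { Q | (∀ i, Q i ∈ martMeasures P (F i) T (assets i) X) ∧
      (∀ y ∈ Y, ∀ i, Integrable (y i) (Q i)) ∧
      ∀ y ∈ Y, (∑ i, ∫ ω, y i ω ∂(Q i)) ≤ 0 }

/-- `ℳ^φ_e(𝒴) = {Q ∈ ℳₑ(𝒴) : E_{Qⁱ}[|φⁱ|] < ∞ ∀ i}`. -/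
def MeYphi {J N : ℕ} [MeasurableSpace Ω] (P : Measure Ω)
    (F : Fin N → ℕ → MeasurableSpace Ω) (T : ℕ) (assets : Fin N → Finset (Fin J))
    (X : Fin J → ℕ → Ω → ℝ) (Y : Set (Fin N → Ω → ℝ))
    (φ : Fin N → Ω → ℝ) : Set (Fin N → Measure Ω) :=
  { Q | Q ∈ MeY P F T assets X Y ∧ ∀ i, Integrable (φ i) (Q i) }

/-- Closedness of a set of random vectors under componentwise `P`-a.s. convergence
of sequences (within `L⁰(Ω, 𝐅_T, P)`). -/
def ClosedAS {N : ℕ} [MeasurableSpace Ω] (P : Measure Ω)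
    (FT : Fin N → MeasurableSpace Ω) (S : Set (Fin N → Ω → ℝ)) : Prop :=
  ∀ (f : ℕ → Fin N → Ω → ℝ) (g : Fin N → Ω → ℝ),
    (∀ n, f n ∈ S) → (∀ i, Measurable[FT i] (g i)) →
    (∀ i, ∀ᵐ ω ∂P, Tendsto (fun n => f n i ω) atTop (𝓝 (g i ω))) →
    g ∈ S

/-- Collective superhedging price `ρ^𝒴₊(f)` (with `inf ∅ = +∞`). -/
noncomputable def rhoPlus {N : ℕ} [MeasurableSpace Ω] (P : Measure Ω)
    (K : Fin N → Set (Ω → ℝ)) (Y : Set (Fin N → Ω → ℝ))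
    (f : Fin N → Ω → ℝ) : EReal :=
  sInf { z : EReal | ∃ m : Fin N → ℝ, z = ((∑ i, m i : ℝ) : EReal) ∧
      ∃ k : Fin N → Ω → ℝ, (∀ i, k i ∈ K i) ∧ ∃ y ∈ Y,
        ∀ i, ∀ᵐ ω ∂P, f i ω ≤ m i + k i ω + y i ω }

/-- Collective subhedging price `ρ^𝒴₋(f)` (with `sup ∅ = −∞`). -/
noncomputable def rhoMinus {N : ℕ} [MeasurableSpace Ω] (P : Measure Ω)
    (K : Fin N → Set (Ω → ℝ)) (Y : Set (Fin N → Ω → ℝ))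
    (f : Fin N → Ω → ℝ) : EReal :=
  sSup { z : EReal | ∃ m : Fin N → ℝ, z = ((∑ i, m i : ℝ) : EReal) ∧
      ∃ k : Fin N → Ω → ℝ, (∀ i, k i ∈ K i) ∧ ∃ y ∈ Y,
        ∀ i, ∀ᵐ ω ∂P, m i + k i ω - y i ω ≤ f i ω }

/-- `ρ^𝒴₊(f)` is attained. -/
def rhoPlusAttained {N : ℕ} [MeasurableSpace Ω] (P : Measure Ω)
    (K : Fin N → Set (Ω → ℝ)) (Y : Set (Fin N → Ω → ℝ))
    (f : Fin N → Ω → ℝ) : Prop :=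
  ∃ (m : Fin N → ℝ) (k y : Fin N → Ω → ℝ), y ∈ Y ∧ (∀ i, k i ∈ K i) ∧
    (∀ i, ∀ᵐ ω ∂P, f i ω ≤ m i + k i ω + y i ω) ∧
    rhoPlus P K Y f = ((∑ i, m i : ℝ) : EReal)

/-- `ρ^𝒴₋(f)` is attained. -/
def rhoMinusAttained {N : ℕ} [MeasurableSpace Ω] (P : Measure Ω)
    (K : Fin N → Set (Ω → ℝ)) (Y : Set (Fin N → Ω → ℝ))
    (f : Fin N → Ω → ℝ) : Prop :=
  ∃ (m : Fin N → ℝ) (k y : Fin N → Ω → ℝ), y ∈ Y ∧ (∀ i, k i ∈ K i) ∧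
    (∀ i, ∀ᵐ ω ∂P, m i + k i ω - y i ω ≤ f i ω) ∧
    rhoMinus P K Y f = ((∑ i, m i : ℝ) : EReal)

/-- `f` is `𝒴`-collectively replicable: `f ∈ ℝ^N + (K₁ × ⋯ × K_N) + 𝒴` in `L⁰`. -/
def Replicable {N : ℕ} [MeasurableSpace Ω] (P : Measure Ω)
    (K : Fin N → Set (Ω → ℝ)) (Y : Set (Fin N → Ω → ℝ))
    (f : Fin N → Ω → ℝ) : Prop :=
  ∃ (m : Fin N → ℝ) (k y : Fin N → Ω → ℝ), y ∈ Y ∧ (∀ i, k i ∈ K i) ∧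
    ∀ i, f i =ᵐ[P] fun ω => m i + k i ω + y i ω


lemma ofReal_max_zero (x : ℝ) : ENNReal.ofReal (max x 0) = ENNReal.ofReal x := by
  rcases le_total x 0 with h | h
  · rw [max_eq_right h, ENNReal.ofReal_zero, ENNReal.ofReal_of_nonpos h]
  · rw [max_eq_left h]

lemma lintegral_ofReal_lt_top {m0 : MeasurableSpace Ω} {Q : Measure Ω}
    {f : Ω → ℝ} (hf : Integrable f Q) :
    (∫⁻ ω, ENNReal.ofReal (f ω) ∂Q) < ⊤ := by
  refine lt_of_le_of_lt (lintegral_mono fun ω => ?_) hf.2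
  rw [Real.enorm_eq_ofReal_abs]
  exact ENNReal.ofReal_le_ofReal (le_abs_self _)

/-- Lemma A: bounded `m'`-measurable times martingale increment has zero integral. -/
lemma integral_bddmul_eq_zero {m0 : MeasurableSpace Ω} {Q : Measure Ω}
    [IsProbabilityMeasure Q] {m' : MeasurableSpace Ω} (hm' : m' ≤ m0)
    {g D : Ω → ℝ} (hg : Measurable[m'] g) {a : ℝ} (hgbd : ∀ ω, |g ω| ≤ a)
    (hD : Integrable D Q) (hD0 : Q[D | m'] =ᵐ[Q] 0) :
    ∫ ω, g ω * D ω ∂Q = 0 := by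
  have hgm0 : Measurable[m0] g := hg.mono hm' le_rfl
  have hint : Integrable (g * D) Q :=
    hD.bdd_mul (c := a) hgm0.aestronglyMeasurable (Eventually.of_forall fun ω => by simpa [Real.norm_eq_abs] using hgbd ω)
  have hpull : Q[g * D | m'] =ᵐ[Q] g * Q[D | m'] :=
    condExp_mul_of_stronglyMeasurable_left hg.stronglyMeasurable hint hD
  have h0 : Q[g * D | m'] =ᵐ[Q] (fun _ => (0 : ℝ)) := by
    filter_upwards [hpull, hD0] with ω h1 h2
    simp [h1, Pi.mul_apply, h2]
  calc ∫ ω, g ω * D ω ∂Q = ∫ ω, (g * D) ω ∂Q := rfl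
    _ = ∫ ω, (Q[g * D | m']) ω ∂Q := (integral_condExp hm').symm
    _ = ∫ ω, (0 : ℝ) ∂Q := integral_congr_ae h0
    _ = 0 := integral_zero _ _

/-- Lemma B: one-step identity on a predictable truncation set. -/
lemma step_eq {m0 : MeasurableSpace Ω} (Q : Measure Ω)
    [IsProbabilityMeasure Q] {m' : MeasurableSpace Ω} (hm' : m' ≤ m0)
    {J : ℕ} (A : Finset (Fin J)) (Z : Ω → ℝ) (U D : Fin J → Ω → ℝ)
    (hZ : Measurable[m'] Z) (hU : ∀ j ∈ A, Measurable[m'] (U j))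
    (hD : ∀ j ∈ A, Integrable (D j) Q)
    (hD0 : ∀ j ∈ A, Q[D j | m'] =ᵐ[Q] 0)
    (E : Set Ω) (hE : MeasurableSet[m'] E) (a : ℝ)
    (hZbd : ∀ ω ∈ E, |Z ω| ≤ a) (hUbd : ∀ j ∈ A, ∀ ω ∈ E, |U j ω| ≤ a) :
    Integrable (E.indicator Z) Q ∧
    Integrable (E.indicator fun ω => Z ω + ∑ j ∈ A, U j ω * D j ω) Q ∧
    ∫ ω, E.indicator (fun ω => Z ω + ∑ j ∈ A, U j ω * D j ω) ω ∂Q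
      = ∫ ω, E.indicator Z ω ∂Q := by
  have hEm0 : MeasurableSet[m0] E := hm' E hE
  have hZm0 : Measurable[m0] (E.indicator Z) := ((hZ.indicator hE).mono hm' le_rfl)
  have hZi : Integrable (E.indicator Z) Q := by
    refine Integrable.mono' (integrable_const |a|) hZm0.aestronglyMeasurable ?_
    refine Eventually.of_forall fun ω => ?_
    rw [Real.norm_eq_abs]
    by_cases hω : ω ∈ E
    · rw [Set.indicator_of_mem hω]
      exact le_trans (hZbd ω hω) (le_abs_self a)
    · rw [Set.indicator_of_notMem hω]
      simp [abs_nonneg]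
  have htermeq : ∀ j, E.indicator (fun ω => U j ω * D j ω)
      = fun ω => E.indicator (U j) ω * D j ω := by
    intro j
    funext ω
    by_cases hω : ω ∈ E <;>
      simp [Set.indicator_of_mem, Set.indicator_of_notMem, hω]
  have htermInt : ∀ j ∈ A, Integrable (E.indicator fun ω => U j ω * D j ω) Q := by
    intro j hj
    rw [htermeq j]
    refine (hD j hj).bdd_mul (c := |a|) ?_ (Eventually.of_forall fun ω => ?_)
    · exact ((((hU j hj).indicator hE)).mono hm' le_rfl).aestronglyMeasurable
    · rw [Real.norm_eq_abs]
      by_cases hω : ω ∈ E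
      · rw [Set.indicator_of_mem hω]
        exact le_trans (hUbd j hj ω hω) (le_abs_self a)
      · rw [Set.indicator_of_notMem hω]; simp [abs_nonneg]
  have hterm0 : ∀ j ∈ A, ∫ ω, E.indicator (fun ω => U j ω * D j ω) ω ∂Q = 0 := by
    intro j hj
    rw [htermeq j]
    refine integral_bddmul_eq_zero hm' ((hU j hj).indicator hE) (a := |a|)
      (fun ω => ?_) (hD j hj) (hD0 j hj)
    by_cases hω : ω ∈ E
    · rw [Set.indicator_of_mem hω]
      exact (hUbd j hj ω hω).trans (le_abs_self a)
    · rw [Set.indicator_of_notMem hω]; simp [abs_nonneg]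
  have hsplit : E.indicator (fun ω => Z ω + ∑ j ∈ A, U j ω * D j ω)
      = fun ω => E.indicator Z ω + ∑ j ∈ A, E.indicator (fun ω => U j ω * D j ω) ω := by
    funext ω
    by_cases hω : ω ∈ E
    · simp [Set.indicator_of_mem hω]
    · simp [Set.indicator_of_notMem hω]
  have hsumInt : Integrable (fun ω => ∑ j ∈ A, E.indicator (fun ω => U j ω * D j ω) ω) Q :=
    integrable_finset_sum A htermInt
  have hVi : Integrable (E.indicator fun ω => Z ω + ∑ j ∈ A, U j ω * D j ω) Q := by
    rw [hsplit]; exact hZi.add hsumInt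
  refine ⟨hZi, hVi, ?_⟩
  rw [hsplit, integral_add hZi hsumInt, integral_finset_sum A htermInt,
    Finset.sum_congr rfl hterm0, Finset.sum_const_zero, add_zero]

lemma lintegral_ofReal_lt_top' {m0 : MeasurableSpace Ω} {Q : Measure Ω}
    {f : Ω → ℝ} (hf : Integrable f Q) :
    (∫⁻ ω, ENNReal.ofReal (f ω) ∂Q) < ⊤ := by
  refine lt_of_le_of_lt (lintegral_mono fun ω => ?_) hf.2
  rw [Real.enorm_eq_ofReal_abs]
  exact ENNReal.ofReal_le_ofReal (le_abs_self _)

/-- Positive/negative part balance from equality of Bochner integrals. -/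
lemma balance_of_integral_eq {m0 : MeasurableSpace Ω} {Q : Measure Ω}
    {f g : Ω → ℝ} (hf : Integrable f Q) (hg : Integrable g Q)
    (h : ∫ ω, f ω ∂Q = ∫ ω, g ω ∂Q) :
    (∫⁻ ω, ENNReal.ofReal (f ω) ∂Q) + (∫⁻ ω, ENNReal.ofReal (-(g ω)) ∂Q)
      = (∫⁻ ω, ENNReal.ofReal (g ω) ∂Q) + (∫⁻ ω, ENNReal.ofReal (-(f ω)) ∂Q) := by
  have hpf := lintegral_ofReal_lt_top' hf
  have hnf := lintegral_ofReal_lt_top' hf.neg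
  have hpg := lintegral_ofReal_lt_top' hg
  have hng := lintegral_ofReal_lt_top' hg.neg
  simp only [Pi.neg_apply] at hnf hng
  rw [integral_eq_lintegral_pos_part_sub_lintegral_neg_part hf,
    integral_eq_lintegral_pos_part_sub_lintegral_neg_part hg] at h
  have h2 : (∫⁻ ω, ENNReal.ofReal (f ω) ∂Q).toReal + (∫⁻ ω, ENNReal.ofReal (-(g ω)) ∂Q).toReal
      = (∫⁻ ω, ENNReal.ofReal (g ω) ∂Q).toReal + (∫⁻ ω, ENNReal.ofReal (-(f ω)) ∂Q).toReal := by
    have hnf' : (∫⁻ ω, ENNReal.ofReal (-(f ω)) ∂Q) = ∫⁻ ω, ENNReal.ofReal (-f ω) ∂Q := rfl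
    linarith [h]
  have h3 : ((∫⁻ ω, ENNReal.ofReal (f ω) ∂Q) + (∫⁻ ω, ENNReal.ofReal (-(g ω)) ∂Q)).toReal
      = ((∫⁻ ω, ENNReal.ofReal (g ω) ∂Q) + (∫⁻ ω, ENNReal.ofReal (-(f ω)) ∂Q)).toReal := by
    rw [ENNReal.toReal_add hpf.ne hng.ne, ENNReal.toReal_add hpg.ne hnf.ne]
    exact h2
  exact (ENNReal.toReal_eq_toReal_iff' (by exact (ENNReal.add_lt_top.mpr ⟨hpf, hng⟩).ne)
    (by exact (ENNReal.add_lt_top.mpr ⟨hpg, hnf⟩).ne)).mp h3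

/-- Monotone convergence for indicators of an increasing family covering the support. -/
lemma iSup_lintegral_indicator {m0 : MeasurableSpace Ω} {Q : Measure Ω}
    (f : Ω → ℝ≥0∞) (hf : Measurable f)
    (E : ℕ → Set Ω) (hEmeas : ∀ n, MeasurableSet (E n)) (hmono : Monotone E)
    (hcov : ∀ ω, f ω ≠ 0 → ∃ n, ω ∈ E n) :
    (⨆ n, ∫⁻ ω, (E n).indicator f ω ∂Q) = ∫⁻ ω, f ω ∂Q := by
  rw [← lintegral_iSup (fun n => hf.indicator (hEmeas n))
      (fun n m hnm ω => Set.indicator_le_indicator_of_subset (hmono hnm) (fun _ => zero_le) ω)]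
  congr 1
  funext ω
  by_cases h0 : f ω = 0
  · simp only [h0]
    refine le_antisymm (iSup_le fun n => ?_) zero_le
    by_cases hω : ω ∈ E n
    · rw [Set.indicator_of_mem hω, h0]
    · rw [Set.indicator_of_notMem hω]
  · obtain ⟨n, hn⟩ := hcov ω h0
    refine le_antisymm (iSup_le fun m => ?_) ?_
    · by_cases hω : ω ∈ E m
      · rw [Set.indicator_of_mem hω]
      · rw [Set.indicator_of_notMem hω]; exact zero_le
    · refine le_trans ?_ (le_iSup _ n)
      rw [Set.indicator_of_mem hn]

/-- Key lemma: a gain from trading, bounded below by an integrable function,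
is integrable with zero expectation under a martingale measure. -/
lemma gain_integral_eq_zero {m0 : MeasurableSpace Ω} (Q : Measure Ω)
    [IsProbabilityMeasure Q] {J : ℕ}
    (F : ℕ → MeasurableSpace Ω) (hFmono : Monotone F) (hFle : ∀ t, F t ≤ m0)
    (T : ℕ) (A : Finset (Fin J)) (X : Fin J → ℕ → Ω → ℝ)
    (hadapted : ∀ j ∈ A, ∀ t, t ≤ T → Measurable[F t] (X j t))
    (hint : ∀ j ∈ A, ∀ t, t ≤ T → Integrable (X j t) Q)
    (hmart : ∀ j ∈ A, ∀ s t, s ≤ t → t ≤ T → X j s =ᵐ[Q] Q[X j t | F s])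
    (H : Fin J → ℕ → Ω → ℝ)
    (hH : ∀ j ∈ A, ∀ s, 1 ≤ s → s ≤ T → Measurable[F (s - 1)] (H j s))
    (h : Ω → ℝ) (hh : Integrable h Q)
    (hbd : ∀ᵐ ω ∂Q, -(h ω) ≤ ∑ j ∈ A, ∑ s ∈ Finset.Icc 1 T,
      H j s ω * (X j s ω - X j (s - 1) ω)) :
    Integrable (fun ω => ∑ j ∈ A, ∑ s ∈ Finset.Icc 1 T,
      H j s ω * (X j s ω - X j (s - 1) ω)) Q ∧
    ∫ ω, (∑ j ∈ A, ∑ s ∈ Finset.Icc 1 T, H j s ω * (X j s ω - X j (s - 1) ω)) ∂Q = 0 := by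
  classical
  set V : ℕ → Ω → ℝ := fun t ω => ∑ j ∈ A, ∑ s ∈ Finset.Icc 1 t,
    H j s ω * (X j s ω - X j (s - 1) ω) with hVdef
  have hV0 : ∀ ω, V 0 ω = 0 := by
    intro ω
    simp [hVdef, show Finset.Icc 1 0 = (∅ : Finset ℕ) from Finset.Icc_eq_empty (by omega)]
  have hVstep : ∀ t, V (t + 1) = fun ω => V t ω +
      ∑ j ∈ A, H j (t + 1) ω * (X j (t + 1) ω - X j t ω) := by
    intro t
    funext ω
    simp only [hVdef]
    rw [← Finset.sum_add_distrib]
    refine Finset.sum_congr rfl fun j _ => ?_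
    rw [← Finset.insert_Icc_right_eq_Icc_add_one (by omega : 1 ≤ t + 1),
      Finset.sum_insert (by simp)]
    simp only [Nat.add_sub_cancel]
    ring
  have hVmeas : ∀ t, t ≤ T → Measurable[F t] (V t) := by
    intro t ht
    refine Finset.measurable_sum _ fun j hj => ?_
    refine Finset.measurable_sum _ fun s hs => ?_
    rw [Finset.mem_Icc] at hs
    have h1 : Measurable[F t] (H j s) :=
      (hH j hj s hs.1 (hs.2.trans ht)).mono (hFmono (by omega : s - 1 ≤ t)) le_rfl
    have h2 : Measurable[F t] (X j s) :=
      (hadapted j hj s (hs.2.trans ht)).mono (hFmono hs.2) le_rfl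
    have h3 : Measurable[F t] (X j (s - 1)) :=
      (hadapted j hj (s - 1) (by omega)).mono (hFmono (by omega : s - 1 ≤ t)) le_rfl
    exact h1.mul (h2.sub h3)
  have hVm0 : ∀ t, t ≤ T → Measurable[m0] (V t) := fun t ht =>
    (hVmeas t ht).mono (hFle t) le_rfl
  set bI : ℕ → ℝ≥0∞ := fun t => ∫⁻ ω, ENNReal.ofReal (V t ω) ∂Q with hbIdef
  set cI : ℕ → ℝ≥0∞ := fun t => ∫⁻ ω, ENNReal.ofReal (-(V t ω)) ∂Q with hcIdef
  -- truncation sets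
  set Es : ℕ → ℕ → Set Ω := fun t n =>
    {ω | |V t ω| ≤ (n : ℝ) ∧ ∀ j ∈ A, |H j (t + 1) ω| ≤ (n : ℝ)} with hEsdef
  have hEmeas : ∀ t, t + 1 ≤ T → ∀ n, MeasurableSet[F t] (Es t n) := by
    intro t ht n
    have h1 : MeasurableSet[F t] {ω | |V t ω| ≤ (n : ℝ)} :=
      (measurable_abs.comp (hVmeas t (by omega))) measurableSet_Iic
    have h2 : ∀ j ∈ A, MeasurableSet[F t] {ω | |H j (t + 1) ω| ≤ (n : ℝ)} := by
      intro j hj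
      have hm : Measurable[F t] (H j (t + 1)) := hH j hj (t + 1) (by omega) ht
      exact (measurable_abs.comp hm) measurableSet_Iic
    have : Es t n = {ω | |V t ω| ≤ (n : ℝ)} ∩ ⋂ j ∈ A, {ω | |H j (t + 1) ω| ≤ (n : ℝ)} := by
      ext ω
      simp [hEsdef, Set.mem_iInter]
    rw [this]
    exact h1.inter (MeasurableSet.biInter A.countable_toSet h2)
  have hEmono : ∀ t, Monotone (Es t) := by
    intro t n m hnm ω hω
    obtain ⟨h1, h2⟩ := hω
    exact ⟨h1.trans (by exact_mod_cast Nat.cast_le.mpr hnm),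
      fun j hj => (h2 j hj).trans (by exact_mod_cast Nat.cast_le.mpr hnm)⟩
  have hEcov : ∀ t ω, ∃ n, ω ∈ Es t n := by
    intro t ω
    obtain ⟨n, hn⟩ := exists_nat_ge (|V t ω| + ∑ j ∈ A, |H j (t + 1) ω|)
    refine ⟨n, le_trans (le_add_of_nonneg_right
      (Finset.sum_nonneg fun j _ => abs_nonneg _)) hn, fun j hj => ?_⟩
    have h1 : |H j (t + 1) ω| ≤ ∑ j ∈ A, |H j (t + 1) ω| :=
      Finset.single_le_sum (f := fun j => |H j (t + 1) ω|) (fun j _ => abs_nonneg _) hj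
    exact h1.trans (le_trans (le_add_of_nonneg_left (abs_nonneg _)) hn)
  -- the one-step identity with an extra conditioning set
  have key : ∀ t, t + 1 ≤ T → ∀ C : Set Ω, MeasurableSet[F t] C → ∀ n : ℕ,
      Integrable ((Es t n ∩ C).indicator (V t)) Q ∧
      Integrable ((Es t n ∩ C).indicator (V (t + 1))) Q ∧
      ∫ ω, (Es t n ∩ C).indicator (V (t + 1)) ω ∂Q
        = ∫ ω, (Es t n ∩ C).indicator (V t) ω ∂Q := by
    intro t ht C hC n
    have hD0 : ∀ j ∈ A, Q[(fun ω => X j (t + 1) ω - X j t ω) | F t] =ᵐ[Q] 0 := by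
      intro j hj
      have hsub : Q[X j (t + 1) - X j t | F t]
          =ᵐ[Q] Q[X j (t + 1) | F t] - Q[X j t | F t] :=
        condExp_sub (hint j hj (t + 1) ht) (hint j hj t (by omega)) (F t)
      have hXt : Q[X j t | F t] = X j t :=
        condExp_of_stronglyMeasurable (hFle t)
          ((hadapted j hj t (by omega)).stronglyMeasurable) (hint j hj t (by omega))
      have hm := hmart j hj t (t + 1) (by omega) ht
      have : Q[X j (t + 1) - X j t | F t] =ᵐ[Q] 0 := by
        filter_upwards [hsub, hm] with ω h1 h2
        rw [h1, Pi.sub_apply, hXt, ← h2, Pi.zero_apply, sub_self]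
      exact this
    have hres := step_eq Q (hFle t) A (V t) (fun j => H j (t + 1))
      (fun j ω => X j (t + 1) ω - X j t ω) (hVmeas t (by omega))
      (fun j hj => hH j hj (t + 1) (by omega) ht)
      (fun j hj => (hint j hj (t + 1) ht).sub (hint j hj t (by omega)))
      hD0 (Es t n ∩ C) ((hEmeas t ht n).inter hC) (n : ℝ)
      (fun ω hω => hω.1.1) (fun j hj ω hω => hω.1.2 j hj)
    refine ⟨hres.1, ?_, ?_⟩
    · rw [hVstep t]; exact hres.2.1
    · rw [hVstep t]; exact hres.2.2
  -- terminal negative part is integrable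
  have hcT : cI T < ⊤ := by
    refine lt_of_le_of_lt (lintegral_mono_ae ?_) hh.2
    filter_upwards [hbd] with ω hω
    rw [Real.enorm_eq_ofReal_abs]
    exact ENNReal.ofReal_le_ofReal (by simp only [hVdef]; linarith [le_abs_self (h ω), neg_abs_le (h ω)])
  -- backward propagation of finiteness
  have hcmono : ∀ t, t + 1 ≤ T → cI (t + 1) < ⊤ → cI t < ⊤ := by
    intro t ht hfin
    set C : Set Ω := {ω | V t ω < 0} with hCdef
    have hC : MeasurableSet[F t] C := (hVmeas t (by omega)) measurableSet_Iio
    set np : Ω → ℝ := fun ω => max (-(V (t + 1) ω)) 0 with hnpdef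
    have hnpm : Measurable[m0] np := ((hVm0 (t + 1) ht).neg.max measurable_const)
    have hofardr : ∀ ω, ENNReal.ofReal (np ω) = ENNReal.ofReal (-(V (t + 1) ω)) :=
      fun ω => ofReal_max_zero _
    have hnpint : Integrable np Q := by
      refine ⟨hnpm.aestronglyMeasurable, ?_⟩
      have heq : (fun ω => ‖np ω‖ₑ) = fun ω => ENNReal.ofReal (-(V (t + 1) ω)) := by
        funext ω
        rw [Real.enorm_eq_ofReal_abs, abs_of_nonneg (le_max_right _ _), hofardr]
      show (∫⁻ ω, ‖np ω‖ₑ ∂Q) < ⊤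
      rw [heq]
      exact hfin
    have hnpval : ∫ ω, np ω ∂Q = (cI (t + 1)).toReal := by
      have hnn : 0 ≤ᵐ[Q] np := Eventually.of_forall fun ω => le_max_right _ _
      rw [integral_eq_lintegral_of_nonneg_ae hnn hnpm.aestronglyMeasurable]
      congr 1
      exact lintegral_congr fun ω => hofardr ω
    have hn : ∀ n : ℕ, (∫⁻ ω, ((Es t n ∩ C).indicator
        (fun ω => ENNReal.ofReal (max (-(V t ω)) 0)) ω) ∂Q) ≤ cI (t + 1) := by
      intro n
      obtain ⟨hZint, hVint, heq⟩ := key t ht C hC n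
      have h1 : -(cI (t + 1)).toReal ≤ ∫ ω, (Es t n ∩ C).indicator (V (t + 1)) ω ∂Q := by
        have hle : (-np) ≤ fun ω => (Es t n ∩ C).indicator (V (t + 1)) ω := by
          intro ω
          simp only [Pi.neg_apply]
          by_cases hω : ω ∈ Es t n ∩ C
          · rw [Set.indicator_of_mem hω]
            exact neg_le.mpr (le_max_left _ _)
          · rw [Set.indicator_of_notMem hω]
            exact neg_nonpos.mpr (le_max_right _ _)
        have hmono' := integral_mono hnpint.neg (by exact hVint) hle
        have hneg : ∫ ω, (-np) ω ∂Q = -(cI (t + 1)).toReal := by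
          have heq0 : ∫ ω, (-np) ω ∂Q = ∫ ω, -(np ω) ∂Q := rfl
          rw [heq0, integral_neg, hnpval]
        rw [hneg] at hmono'
        exact hmono'
      have h2 : (Es t n ∩ C).indicator (V t)
          = fun ω => -((Es t n ∩ C).indicator (fun ω => max (-(V t ω)) 0) ω) := by
        funext ω
        by_cases hω : ω ∈ Es t n ∩ C
        · rw [Set.indicator_of_mem hω, Set.indicator_of_mem hω]
          have hneg : V t ω < 0 := hω.2
          rw [max_eq_left (by linarith)]
          ring
        · rw [Set.indicator_of_notMem hω, Set.indicator_of_notMem hω, neg_zero]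
      have h4 : Integrable ((Es t n ∩ C).indicator fun ω => max (-(V t ω)) 0) Q := by
        have := hZint.neg
        refine this.congr (Eventually.of_forall fun ω => ?_)
        rw [Pi.neg_apply, h2]
        ring
      have h3 : ∫ ω, (Es t n ∩ C).indicator (fun ω => max (-(V t ω)) 0) ω ∂Q
          ≤ (cI (t + 1)).toReal := by
        have h5 : ∫ ω, (Es t n ∩ C).indicator (V t) ω ∂Q
            = -∫ ω, (Es t n ∩ C).indicator (fun ω => max (-(V t ω)) 0) ω ∂Q := by
          rw [h2, integral_neg]
        have h6 := heq ▸ h1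
        rw [h5] at h6
        linarith
      have h7 : ENNReal.ofReal (∫ ω, (Es t n ∩ C).indicator
          (fun ω => max (-(V t ω)) 0) ω ∂Q)
          = ∫⁻ ω, ((Es t n ∩ C).indicator (fun ω => ENNReal.ofReal (max (-(V t ω)) 0)) ω) ∂Q := by
        rw [ofReal_integral_eq_lintegral_ofReal h4 (Eventually.of_forall fun ω => ?_)]
        · refine lintegral_congr fun ω => ?_
          by_cases hω : ω ∈ Es t n ∩ C
          · rw [Set.indicator_of_mem hω, Set.indicator_of_mem hω]
          · rw [Set.indicator_of_notMem hω, Set.indicator_of_notMem hω, ENNReal.ofReal_zero]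
        · by_cases hω : ω ∈ Es t n ∩ C
          · rw [Set.indicator_of_mem hω]; exact le_max_right _ _
          · rw [Set.indicator_of_notMem hω]; exact le_rfl
      rw [← h7]
      calc ENNReal.ofReal (∫ ω, (Es t n ∩ C).indicator (fun ω => max (-(V t ω)) 0) ω ∂Q)
          ≤ ENNReal.ofReal (cI (t + 1)).toReal := ENNReal.ofReal_le_ofReal h3
        _ = cI (t + 1) := ENNReal.ofReal_toReal hfin.ne
    have hsup := iSup_lintegral_indicator (Q := Q)
      (fun ω => ENNReal.ofReal (max (-(V t ω)) 0))
      ((((hVm0 t (by omega)).neg.max measurable_const)).ennreal_ofReal)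
      (fun n => Es t n ∩ C)
      (fun n => (hFle t) _ ((hEmeas t ht n).inter hC))
      (fun n m hnm => Set.inter_subset_inter_left _ (hEmono t hnm))
      (fun ω hω => by
        have hVneg : V t ω < 0 := by
          by_contra hge
          push_neg at hge
          apply hω
          show ENNReal.ofReal (max (-(V t ω)) 0) = 0
          rw [max_eq_right (by linarith : -(V t ω) ≤ 0), ENNReal.ofReal_zero]
        obtain ⟨n, hn⟩ := hEcov t ω
        exact ⟨n, hn, hVneg⟩)
    have hceq : cI t = ∫⁻ ω, ENNReal.ofReal (max (-(V t ω)) 0) ∂Q := by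
      exact (lintegral_congr fun ω => (ofReal_max_zero _).symm)
    rw [hceq, ← hsup]
    exact lt_of_le_of_lt (iSup_le hn) hfin
  -- backward finiteness of all negative parts
  have hcfin : ∀ d, cI (T - d) < ⊤ := by
    intro d
    induction d with
    | zero => simpa using hcT
    | succ d ih =>
      rcases le_or_gt T d with hTd | hdT
      · have hz : T - (d + 1) = 0 := by omega
        rw [hz]
        have : ∀ ω, -(V 0 ω) = (0 : ℝ) := fun ω => by rw [hV0 ω, neg_zero]
        calc cI 0 = ∫⁻ ω, ENNReal.ofReal ((0 : ℝ)) ∂Q :=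
              lintegral_congr fun ω => by rw [show -(V 0 ω) = (0:ℝ) from this ω]
          _ < ⊤ := by simp
      · have hstep : (T - (d + 1)) + 1 ≤ T := by omega
        have heqt : T - (d + 1) + 1 = T - d := by omega
        exact hcmono (T - (d + 1)) hstep (by rw [heqt]; exact ih)
  have hcfin' : ∀ t, t ≤ T → cI t < ⊤ := by
    intro t ht
    have := hcfin (T - t)
    rwa [show T - (T - t) = t by omega] at this
  -- balance equation
  have hbal : ∀ t, t + 1 ≤ T → bI (t + 1) + cI t = bI t + cI (t + 1) := by
    intro t ht
    set a : ℕ → ℝ≥0∞ := fun n => ∫⁻ ω, (Es t n ∩ Set.univ).indicator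
      (fun ω => ENNReal.ofReal (V (t + 1) ω)) ω ∂Q with hadef
    set d : ℕ → ℝ≥0∞ := fun n => ∫⁻ ω, (Es t n ∩ Set.univ).indicator
      (fun ω => ENNReal.ofReal (-(V t ω))) ω ∂Q with hddef
    set e : ℕ → ℝ≥0∞ := fun n => ∫⁻ ω, (Es t n ∩ Set.univ).indicator
      (fun ω => ENNReal.ofReal (V t ω)) ω ∂Q with hedef
    set f : ℕ → ℝ≥0∞ := fun n => ∫⁻ ω, (Es t n ∩ Set.univ).indicator
      (fun ω => ENNReal.ofReal (-(V (t + 1) ω))) ω ∂Q with hfdef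
    have hindic : ∀ (g : Ω → ℝ) (S : Set Ω) (ω : Ω),
        ENNReal.ofReal (S.indicator g ω) = S.indicator (fun ω => ENNReal.ofReal (g ω)) ω := by
      intro g S ω
      by_cases hω : ω ∈ S
      · rw [Set.indicator_of_mem hω, Set.indicator_of_mem hω]
      · rw [Set.indicator_of_notMem hω, Set.indicator_of_notMem hω, ENNReal.ofReal_zero]
    have hindicneg : ∀ (g : Ω → ℝ) (S : Set Ω) (ω : Ω),
        ENNReal.ofReal (-(S.indicator g ω)) = S.indicator (fun ω => ENNReal.ofReal (-(g ω))) ω := by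
      intro g S ω
      by_cases hω : ω ∈ S
      · rw [Set.indicator_of_mem hω, Set.indicator_of_mem hω]
      · rw [Set.indicator_of_notMem hω, Set.indicator_of_notMem hω, neg_zero,
          ENNReal.ofReal_zero]
    have hpern : ∀ n, a n + d n = e n + f n := by
      intro n
      obtain ⟨hZint, hVint, heq⟩ := key t ht Set.univ MeasurableSet.univ n
      have hb := balance_of_integral_eq hVint hZint heq
      have e1 : (∫⁻ ω, ENNReal.ofReal ((Es t n ∩ Set.univ).indicator (V (t + 1)) ω) ∂Q) = a n :=
        lintegral_congr fun ω => hindic _ _ ω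
      have e2 : (∫⁻ ω, ENNReal.ofReal (-((Es t n ∩ Set.univ).indicator (V t) ω)) ∂Q) = d n :=
        lintegral_congr fun ω => hindicneg _ _ ω
      have e3 : (∫⁻ ω, ENNReal.ofReal ((Es t n ∩ Set.univ).indicator (V t) ω) ∂Q) = e n :=
        lintegral_congr fun ω => hindic _ _ ω
      have e4 : (∫⁻ ω, ENNReal.ofReal (-((Es t n ∩ Set.univ).indicator (V (t + 1)) ω)) ∂Q) = f n :=
        lintegral_congr fun ω => hindicneg _ _ ω
      rw [e1, e2, e3, e4] at hb
      exact hb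
    have hmonoLint : ∀ (g : Ω → ℝ≥0∞), Monotone fun n =>
        ∫⁻ ω, (Es t n ∩ Set.univ).indicator g ω ∂Q := by
      intro g n m hnm
      exact lintegral_mono fun ω => Set.indicator_le_indicator_of_subset
        (Set.inter_subset_inter_left _ (hEmono t hnm)) (fun _ => zero_le) ω
    have hcovU : ∀ (g : Ω → ℝ≥0∞) (ω : Ω), g ω ≠ 0 → ∃ n, ω ∈ Es t n ∩ Set.univ := by
      intro g ω _
      obtain ⟨n, hn⟩ := hEcov t ω
      exact ⟨n, hn, trivial⟩
    have hsupa : (⨆ n, a n) = bI (t + 1) :=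
      iSup_lintegral_indicator _ ((hVm0 (t + 1) ht).ennreal_ofReal) _
        (fun n => (hFle t) _ ((hEmeas t ht n).inter MeasurableSet.univ))
        (fun n m hnm => Set.inter_subset_inter_left _ (hEmono t hnm)) (hcovU _)
    have hsupd : (⨆ n, d n) = cI t :=
      iSup_lintegral_indicator _ ((hVm0 t (by omega)).neg.ennreal_ofReal) _
        (fun n => (hFle t) _ ((hEmeas t ht n).inter MeasurableSet.univ))
        (fun n m hnm => Set.inter_subset_inter_left _ (hEmono t hnm)) (hcovU _)
    have hsupe : (⨆ n, e n) = bI t :=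
      iSup_lintegral_indicator _ ((hVm0 t (by omega)).ennreal_ofReal) _
        (fun n => (hFle t) _ ((hEmeas t ht n).inter MeasurableSet.univ))
        (fun n m hnm => Set.inter_subset_inter_left _ (hEmono t hnm)) (hcovU _)
    have hsupf : (⨆ n, f n) = cI (t + 1) :=
      iSup_lintegral_indicator _ ((hVm0 (t + 1) ht).neg.ennreal_ofReal) _
        (fun n => (hFle t) _ ((hEmeas t ht n).inter MeasurableSet.univ))
        (fun n m hnm => Set.inter_subset_inter_left _ (hEmono t hnm)) (hcovU _)
    calc bI (t + 1) + cI t = (⨆ n, a n) + ⨆ n, d n := by rw [hsupa, hsupd]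
      _ = ⨆ n, a n + d n := ENNReal.iSup_add_iSup (fun i j =>
          ⟨max i j, add_le_add (hmonoLint _ (le_max_left i j))
            (hmonoLint _ (le_max_right i j))⟩)
      _ = ⨆ n, e n + f n := by
          refine iSup_congr fun n => ?_
          exact hpern n
      _ = (⨆ n, e n) + ⨆ n, f n := (ENNReal.iSup_add_iSup (fun i j =>
          ⟨max i j, add_le_add (hmonoLint _ (le_max_left i j))
            (hmonoLint _ (le_max_right i j))⟩)).symm
      _ = bI t + cI (t + 1) := by rw [hsupe, hsupf]
  -- forward induction
  have hfwd : ∀ t, t ≤ T → bI t = cI t := by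
    intro t
    induction t with
    | zero =>
      intro _
      have hb0 : bI 0 = 0 := by
        calc bI 0 = ∫⁻ ω, ENNReal.ofReal ((0 : ℝ)) ∂Q :=
              lintegral_congr fun ω => by rw [hV0 ω]
          _ = 0 := by simp
      have hc0 : cI 0 = 0 := by
        calc cI 0 = ∫⁻ ω, ENNReal.ofReal ((0 : ℝ)) ∂Q :=
              lintegral_congr fun ω => by rw [hV0 ω, neg_zero]
          _ = 0 := by simp
      rw [hb0, hc0]
    | succ t ih =>
      intro ht
      have h1 := hbal t ht
      have h2 := ih (by omega)
      have h3 := hcfin' t (by omega)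
      rw [h2, add_comm (bI (t + 1)) (cI t)] at h1
      exact (ENNReal.add_right_inj h3.ne).mp h1
  have hbT : bI T = cI T := hfwd T le_rfl
  have hcTfin : cI T < ⊤ := hcfin' T le_rfl
  have hbTfin : bI T < ⊤ := hbT ▸ hcTfin
  have hGint : Integrable (V T) Q := by
    refine ⟨(hVm0 T le_rfl).aestronglyMeasurable, ?_⟩
    have hnorm : ∀ ω, ‖V T ω‖ₑ
        = ENNReal.ofReal (V T ω) + ENNReal.ofReal (-(V T ω)) := by
      intro ω
      rw [Real.enorm_eq_ofReal_abs]
      rcases le_total (V T ω) 0 with hle | hle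
      · rw [abs_of_nonpos hle, ENNReal.ofReal_of_nonpos hle, zero_add]
      · rw [abs_of_nonneg hle, ENNReal.ofReal_of_nonpos (by linarith : -(V T ω) ≤ 0), add_zero]
    show (∫⁻ ω, ‖V T ω‖ₑ ∂Q) < ⊤
    rw [lintegral_congr hnorm, lintegral_add_left ((hVm0 T le_rfl).ennreal_ofReal)]
    exact ENNReal.add_lt_top.mpr ⟨hbTfin, hcTfin⟩
  have hGval : ∫ ω, V T ω ∂Q = 0 := by
    rw [integral_eq_lintegral_pos_part_sub_lintegral_neg_part hGint]
    have : (∫⁻ ω, ENNReal.ofReal (-V T ω) ∂Q) = cI T := rfl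
    rw [this, show (∫⁻ ω, ENNReal.ofReal (V T ω) ∂Q) = bI T from rfl, hbT, sub_self]
  exact ⟨hGint, hGval⟩

lemma gainsSet_neg {J : ℕ} (F : ℕ → MeasurableSpace Ω) (T : ℕ) (A : Finset (Fin J))
    (X : Fin J → ℕ → Ω → ℝ) {g : Ω → ℝ} (hg : g ∈ gainsSet F T A X) :
    (fun ω => -(g ω)) ∈ gainsSet F T A X := by
  obtain ⟨H, hH, hgeq⟩ := hg
  refine ⟨fun j s ω => -(H j s ω), fun j hj s h1 hT => (hH j hj s h1 hT).neg, ?_⟩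
  funext ω
  rw [hgeq]
  simp only [neg_mul, Finset.sum_neg_distrib]

lemma spanExch_neg {N R : ℕ} (Ys : Fin R → Fin N → Ω → ℝ) {y : Fin N → Ω → ℝ}
    (hy : y ∈ spanExch Ys) : (fun i ω => -(y i ω)) ∈ spanExch Ys := by
  obtain ⟨x, c, hx, hyi⟩ := hy
  refine ⟨fun i => -(x i), fun r => -(c r), by simp [Finset.sum_neg_distrib, hx], fun i => ?_⟩
  show (fun ω => -(y i ω)) = fun ω => -x i + ∑ r, -c r * Ys r i ω
  funext ω
  rw [hyi i]
  simp only [neg_mul, Finset.sum_neg_distrib, neg_add]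



/-- Core argument: zero expectation of the slack implies a.e. replication. -/
lemma core_repl [m0 : MeasurableSpace Ω]
    (P : Measure Ω) [IsProbabilityMeasure P] {T J N R : ℕ}
    (F : Fin N → ℕ → MeasurableSpace Ω)
    (hFmono : ∀ i, Monotone (F i)) (hFle : ∀ i t, F i t ≤ m0)
    (X : Fin J → ℕ → Ω → ℝ) (assets : Fin N → Finset (Fin J))
    (hadapted : ∀ i, ∀ j ∈ assets i, ∀ t, t ≤ T → Measurable[F i t] (X j t))
    (Ys : Fin R → Fin N → Ω → ℝ)
    (f φ : Fin N → Ω → ℝ)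
    (hfmeas : ∀ i, Measurable[F i T] (f i))
    (hdom_f : ∀ i, ∀ᵐ ω ∂P, |f i ω| ≤ φ i ω)
    (Q : Fin N → Measure Ω)
    (hQ : Q ∈ MeYphi P F T assets X (spanExch Ys) φ)
    (m : Fin N → ℝ) (k y : Fin N → Ω → ℝ)
    (hy : y ∈ spanExch Ys)
    (hk : ∀ i, k i ∈ gainsSet (F i) T (assets i) X)
    (ε : ℝ) (hε : ε = 1 ∨ ε = -1)
    (hae : ∀ i, ∀ᵐ ω ∂P, 0 ≤ ε * (m i + k i ω + y i ω - f i ω))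
    (hsum : ∑ i, m i = ∑ i, ∫ ω, f i ω ∂(Q i)) :
    ∀ i, f i =ᵐ[P] fun ω => m i + k i ω + y i ω := by
  classical
  obtain ⟨⟨hmartQ, hyintQ, hysumQ⟩, hφint⟩ := hQ
  have hprob : ∀ i, IsProbabilityMeasure (Q i) := fun i => (hmartQ i).1
  have hQP : ∀ i, Q i ≪ P := fun i => (hmartQ i).2.1
  have hPQ : ∀ i, P ≪ Q i := fun i => (hmartQ i).2.2.1
  have hε0 : ε ≠ 0 := by rcases hε with h | h <;> rw [h] <;> norm_num
  -- integrability of the data under each `Q i`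
  have hfint : ∀ i, Integrable (f i) (Q i) := by
    intro i
    haveI := hprob i
    refine Integrable.mono' (hφint i)
      (((hfmeas i).mono (hFle i T) le_rfl).aestronglyMeasurable) ?_
    exact ((hdom_f i).filter_mono (hQP i).ae_le).mono fun ω hω => by
      simpa [Real.norm_eq_abs] using hω
  have hyint : ∀ i, Integrable (y i) (Q i) := fun i => hyintQ y hy i
  -- the gains have zero expectation
  have hkzero : ∀ i, Integrable (k i) (Q i) ∧ ∫ ω, k i ω ∂(Q i) = 0 := by
    intro i
    haveI := hprob i
    set hfun : Ω → ℝ := fun ω => |m i| + φ i ω + |y i ω| with hfundef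
    have hhint : Integrable hfun (Q i) :=
      ((integrable_const |m i|).add (hφint i)).add (hyint i).abs
    have hφnn : ∀ᵐ ω ∂(Q i), |f i ω| ≤ φ i ω := (hdom_f i).filter_mono (hQP i).ae_le
    have haeQ : ∀ᵐ ω ∂(Q i), 0 ≤ ε * (m i + k i ω + y i ω - f i ω) :=
      (hae i).filter_mono (hQP i).ae_le
    have hkgain : ∀ g : Ω → ℝ, g ∈ gainsSet (F i) T (assets i) X →
        (∀ᵐ ω ∂(Q i), -(hfun ω) ≤ g ω) →
        Integrable g (Q i) ∧ ∫ ω, g ω ∂(Q i) = 0 := by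
      intro g hg hbd
      obtain ⟨Hs, hHs, hgeq⟩ := hg
      rw [hgeq] at hbd
      have hres := gain_integral_eq_zero (Q i) (F i) (hFmono i) (hFle i) T (assets i) X
        (hadapted i)
        (fun j hj t ht => ((hmartQ i).2.2.2 j hj).1 t ht)
        (fun j hj s t hst ht => ((hmartQ i).2.2.2 j hj).2 s t hst ht)
        Hs hHs hfun hhint hbd
      rw [hgeq]
      exact hres
    rcases hε with hε1 | hε1
    · have hbd : ∀ᵐ ω ∂(Q i), -(hfun ω) ≤ k i ω := by
        filter_upwards [haeQ, hφnn] with ω h1 h2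
        rw [hε1, one_mul] at h1
        have h3 := le_abs_self (m i)
        have h4 := le_abs_self (y i ω)
        have h5 := neg_abs_le (f i ω)
        simp only [hfundef]
        linarith
      exact hkgain (k i) (hk i) hbd
    · have hbd : ∀ᵐ ω ∂(Q i), -(hfun ω) ≤ -(k i ω) := by
        filter_upwards [haeQ, hφnn] with ω h1 h2
        rw [hε1] at h1
        have h3 : m i + k i ω + y i ω - f i ω ≤ 0 := by nlinarith [sq_nonneg ε]
        have h4 := neg_abs_le (m i)
        have h5 := neg_abs_le (y i ω)
        have h6 := le_abs_self (f i ω)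
        simp only [hfundef]
        linarith
      obtain ⟨hint1, hval1⟩ := hkgain (fun ω => -(k i ω))
        (gainsSet_neg (F i) T (assets i) X (hk i)) hbd
      constructor
      · have := hint1.neg
        refine this.congr (Eventually.of_forall fun ω => ?_)
        simp
      · have : ∫ ω, -(k i ω) ∂(Q i) = -∫ ω, k i ω ∂(Q i) := integral_neg _
        rw [this] at hval1
        linarith
  -- the total exchange value is zero
  have hy0 : ∑ i, ∫ ω, y i ω ∂(Q i) = 0 := by
    have h1 : ∑ i, ∫ ω, y i ω ∂(Q i) ≤ 0 := hysumQ y hy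
    have hyneg := spanExch_neg Ys hy
    have h2 : ∑ i, ∫ ω, -(y i ω) ∂(Q i) ≤ 0 := hysumQ _ hyneg
    have h3 : ∑ i, ∫ ω, -(y i ω) ∂(Q i) = -∑ i, ∫ ω, y i ω ∂(Q i) := by
      rw [← Finset.sum_neg_distrib]
      exact Finset.sum_congr rfl fun i _ => integral_neg _
    rw [h3] at h2
    linarith
  -- expectation of the slack
  set g : Fin N → Ω → ℝ := fun i ω => ε * (m i + k i ω + y i ω - f i ω) with hgdef
  have hgint : ∀ i, Integrable (g i) (Q i) := by
    intro i
    haveI := hprob i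
    have h1 : Integrable (fun ω => m i + k i ω) (Q i) :=
      (integrable_const (m i)).add (hkzero i).1
    have h2 : Integrable (fun ω => m i + k i ω + y i ω - f i ω) (Q i) :=
      (h1.add (hyint i)).sub (hfint i)
    exact h2.const_mul ε
  have hgval : ∀ i, ∫ ω, g i ω ∂(Q i)
      = ε * (m i + ∫ ω, y i ω ∂(Q i) - ∫ ω, f i ω ∂(Q i)) := by
    intro i
    haveI := hprob i
    have h1 : Integrable (fun ω => m i + k i ω) (Q i) :=
      (integrable_const (m i)).add (hkzero i).1
    have hsum1 : Integrable (fun ω => m i + k i ω + y i ω) (Q i) := by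
      exact h1.add (hyint i)
    have e1 : ∫ ω, g i ω ∂(Q i)
        = ε * ∫ ω, (m i + k i ω + y i ω - f i ω) ∂(Q i) := by
      simp only [hgdef]
      exact integral_const_mul ε _
    rw [e1, integral_sub hsum1 (hfint i), integral_add h1 (hyint i),
      integral_add (integrable_const (m i)) (hkzero i).1,
      (hkzero i).2, integral_const]
    simp
  have hgnn : ∀ i, 0 ≤ ∫ ω, g i ω ∂(Q i) := by
    intro i
    exact integral_nonneg_of_ae ((hae i).filter_mono (hQP i).ae_le)
  have hgsum : ∑ i, ∫ ω, g i ω ∂(Q i) = 0 := by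
    rw [Finset.sum_congr rfl fun i _ => hgval i, ← Finset.mul_sum]
    have hexp : ∑ i, (m i + ∫ ω, y i ω ∂(Q i) - ∫ ω, f i ω ∂(Q i))
        = ∑ i, m i + ∑ i, ∫ ω, y i ω ∂(Q i) - ∑ i, ∫ ω, f i ω ∂(Q i) := by
      rw [Finset.sum_sub_distrib, Finset.sum_add_distrib]
    rw [hexp, hsum, hy0]
    ring
  have hgzero : ∀ i, ∫ ω, g i ω ∂(Q i) = 0 := by
    have := (Finset.sum_eq_zero_iff_of_nonneg fun i _ => hgnn i).mp hgsum
    exact fun i => this i (Finset.mem_univ i)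
  intro i
  haveI := hprob i
  have hgae : g i =ᵐ[Q i] 0 :=
    (integral_eq_zero_iff_of_nonneg_ae ((hae i).filter_mono (hQP i).ae_le) (hgint i)).mp
      (hgzero i)
  have hgaeP : g i =ᵐ[P] 0 := hgae.filter_mono (hPQ i).ae_le
  filter_upwards [hgaeP] with ω hω
  have : ε * (m i + k i ω + y i ω - f i ω) = 0 := hω
  have h2 : m i + k i ω + y i ω - f i ω = 0 := by
    rcases mul_eq_zero.mp this with h | h
    · exact absurd h hε0
    · exact h
  linarith


/-- primal and dual attainment imply replicability (Proposition prop:attainrepl). -/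
theorem replicable_of_attainment
    {Ω : Type*} [m0 : MeasurableSpace Ω]
    (P : Measure Ω) [IsProbabilityMeasure P]
    (T J N : ℕ) (hT : 1 ≤ T) (hJ : 1 ≤ J) (hN : 1 ≤ N)
    (F : Fin N → ℕ → MeasurableSpace Ω)
    (hFmono : ∀ i, Monotone (F i))
    (hFle : ∀ i t, F i t ≤ m0)
    (hFzero : ∀ i, ∀ A : Set Ω, MeasurableSet[F i 0] A → P A = 0 ∨ P A = 1)
    (X : Fin J → ℕ → Ω → ℝ)
    (assets : Fin N → Finset (Fin J))
    (hassets : ∀ i, (assets i).Nonempty)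
    (hcover : ∀ j, ∃ i, j ∈ assets i)
    (hadapted : ∀ i, ∀ j ∈ assets i, ∀ t, t ≤ T → Measurable[F i t] (X j t))
    (R : ℕ) (Ys : Fin R → Fin N → Ω → ℝ)
    (hYsmeas : ∀ r i, Measurable[F i T] (Ys r i))
    (hNCA : NCA P (fun i => gainsSet (F i) T (assets i) X) (spanExch Ys))
    (f φ : Fin N → Ω → ℝ)
    (hfmeas : ∀ i, Measurable[F i T] (f i))
    (hφmeas : ∀ i, Measurable[F i T] (φ i))
    (hdom_f : ∀ i, ∀ᵐ ω ∂P, |f i ω| ≤ φ i ω)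
    (hdom_Y : ∀ r, ∀ i, ∀ᵐ ω ∂P, |Ys r i ω| ≤ φ i ω) :
    (rhoPlusAttained P (fun i => gainsSet (F i) T (assets i) X) (spanExch Ys) f →
      (∃ Q ∈ MeYphi P F T assets X (spanExch Ys) φ,
        rhoPlus P (fun i => gainsSet (F i) T (assets i) X) (spanExch Ys) f
          = ((∑ i, ∫ ω, f i ω ∂(Q i) : ℝ) : EReal)) →
      Replicable P (fun i => gainsSet (F i) T (assets i) X) (spanExch Ys) f) ∧
    (rhoMinusAttained P (fun i => gainsSet (F i) T (assets i) X) (spanExch Ys) f →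
      (∃ Q ∈ MeYphi P F T assets X (spanExch Ys) φ,
        rhoMinus P (fun i => gainsSet (F i) T (assets i) X) (spanExch Ys) f
          = ((∑ i, ∫ ω, f i ω ∂(Q i) : ℝ) : EReal)) →
      Replicable P (fun i => gainsSet (F i) T (assets i) X) (spanExch Ys) f) := by
  constructor
  · intro hatt hdual
    obtain ⟨mm, k, y, hy, hkmem, hineq, hval⟩ := hatt
    obtain ⟨Q, hQ, hvalQ⟩ := hdual
    have hsum : ∑ i, mm i = ∑ i, ∫ ω, f i ω ∂(Q i) := by
      have h0 := hval.symm.trans hvalQ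
      exact_mod_cast h0
    have hae : ∀ i, ∀ᵐ ω ∂P, 0 ≤ (1 : ℝ) * (mm i + k i ω + y i ω - f i ω) := by
      intro i
      filter_upwards [hineq i] with ω hω
      rw [one_mul]
      linarith
    have hres := core_repl P F hFmono hFle X assets hadapted Ys f φ hfmeas hdom_f Q hQ
      mm k y hy hkmem 1 (Or.inl rfl) hae hsum
    exact ⟨mm, k, y, hy, hkmem, hres⟩
  · intro hatt hdual
    obtain ⟨mm, k, y, hy, hkmem, hineq, hval⟩ := hatt
    obtain ⟨Q, hQ, hvalQ⟩ := hdual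
    have hy2 : (fun i ω => -(y i ω)) ∈ spanExch Ys := spanExch_neg Ys hy
    have hsum : ∑ i, mm i = ∑ i, ∫ ω, f i ω ∂(Q i) := by
      have h0 := hval.symm.trans hvalQ
      exact_mod_cast h0
    have hae : ∀ i, ∀ᵐ ω ∂P, 0 ≤ (-1 : ℝ) * (mm i + k i ω + -(y i ω) - f i ω) := by
      intro i
      filter_upwards [hineq i] with ω hω
      nlinarith [hω]
    have hres := core_repl P F hFmono hFle X assets hadapted Ys f φ hfmeas hdom_f Q hQ
      mm k (fun i ω => -(y i ω)) hy2 hkmem (-1) (Or.inr rfl) hae hsum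
    exact ⟨mm, k, fun i ω => -(y i ω), hy2, hkmem, hres⟩

end CollectiveArb
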